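/- Let J ⊆ I ⊊ R be ideals of a Noetherian local ring R. If the ideal I/J is of linear type over R/J (e.g., if I is generated by a regular sequence modulo J), then J ∩ I^t = J·I^{t-1} for every positive integer t. -/

import Mathlib

open Polynomial

/-- The presentation `A[T₁,…,Tₙ] → Rees_A(I)`, `Tᵢ ↦ fᵢ·u`, attached to a family of
elements of `I`. -/
noncomputable def reesPres {A : Type*} [CommRing A] (I : Ideal A) {n : ℕ}
    (f : Fin n → A) (hf : ∀ i, f i ∈ I) :
    MvPolynomial (Fin n) A →ₐ[A] reesAlgebra I :=
  MvPolynomial.aeval fun i =>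
    (⟨Polynomial.C (f i) * Polynomial.X, by
      rw [Polynomial.C_mul_X_eq_monomial]
      exact reesAlgebra.monomial_mem.mpr (by simpa using hf i)⟩ : reesAlgebra I)

/-- An ideal `I` of `A` is of linear type if, for every (equivalently, some) finite
generating family of `I`, the kernel of the presentation `A[T] ↠ Rees_A(I)` is generated
by its elements that are homogeneous of degree 1; i.e. the natural surjection
`S_A(I) ↠ Rees_A(I)` from the symmetric algebra is an isomorphism. -/
def IsLinearType (A : Type*) [CommRing A] (I : Ideal A) : Prop :=
  ∀ (n : ℕ) (f : Fin n → A) (hf : ∀ i, f i ∈ I),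
    Ideal.span (Set.range f) = I →
    RingHom.ker (reesPres I f hf : MvPolynomial (Fin n) A →+* reesAlgebra I) =
      Ideal.span {F : MvPolynomial (Fin n) A |
        F ∈ RingHom.ker (reesPres I f hf : MvPolynomial (Fin n) A →+* reesAlgebra I) ∧
        F.IsHomogeneous 1}

section Aux

variable {R : Type*} [CommRing R]

private lemma degree_eq_of_isHomogeneous {σ : Type*} {F : MvPolynomial σ R} {t : ℕ}
    (hF : F.IsHomogeneous t) {d : σ →₀ ℕ} (hd : MvPolynomial.coeff d F ≠ 0) :
    d.degree = t := by
  rw [Finsupp.degree_eq_weight_one]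
  exact hF hd

/-- Evaluating a homogeneous polynomial of degree `t`, whose coefficients lie in `J`,
at elements of `I` lands in `J * I ^ t`. -/
private lemma aeval_mem_mul_pow {I J : Ideal R} {n t : ℕ} {f : Fin n → R}
    (hf : ∀ i, f i ∈ I) {F : MvPolynomial (Fin n) R}
    (hF : F.IsHomogeneous t) (hc : ∀ d, MvPolynomial.coeff d F ∈ J) :
    MvPolynomial.aeval f F ∈ J * I ^ t := by
  rw [MvPolynomial.as_sum F, map_sum]
  refine Ideal.sum_mem _ fun d hd => ?_
  rw [MvPolynomial.aeval_monomial]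
  have hdeg : d.degree = t :=
    degree_eq_of_isHomogeneous hF (MvPolynomial.mem_support_iff.mp hd)
  have hprod : (d.prod fun i k => f i ^ k) ∈ I ^ t := by
    rw [← hdeg]
    rw [Finsupp.degree_apply]
    rw [← Finset.prod_pow_eq_pow_sum]
    exact Ideal.prod_mem_prod fun i _ => Ideal.pow_mem_pow (hf i) _
  simpa using Ideal.mul_mem_mul (hc d) hprod

private lemma aeval_mem_pow {I : Ideal R} {n t : ℕ} {f : Fin n → R}
    (hf : ∀ i, f i ∈ I) {F : MvPolynomial (Fin n) R} (hF : F.IsHomogeneous t) :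
    MvPolynomial.aeval f F ∈ I ^ t := by
  have := aeval_mem_mul_pow (J := (⊤ : Ideal R)) hf hF (fun d => trivial)
  rwa [Ideal.top_mul] at this

/-- A homogeneous polynomial over `R ⧸ J` lifts to a homogeneous polynomial over `R`. -/
private lemma exists_homogeneous_lift (J : Ideal R) {n : ℕ} {k : ℕ}
    (P : MvPolynomial (Fin n) (R ⧸ J)) (hP : P.IsHomogeneous k) :
    ∃ Q : MvPolynomial (Fin n) R, Q.IsHomogeneous k ∧
      MvPolynomial.map (Ideal.Quotient.mk J) Q = P := by
  choose s hs using fun c : R ⧸ J => Ideal.Quotient.mk_surjective c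
  refine ⟨∑ d ∈ P.support, MvPolynomial.monomial d (s (MvPolynomial.coeff d P)), ?_, ?_⟩
  · exact MvPolynomial.IsHomogeneous.sum _ _ _ fun d hd =>
      MvPolynomial.isHomogeneous_monomial _
        (degree_eq_of_isHomogeneous hP (MvPolynomial.mem_support_iff.mp hd))
  · rw [map_sum]
    simp_rw [MvPolynomial.map_monomial, hs]
    exact (MvPolynomial.as_sum P).symm

private lemma mk_aeval (J : Ideal R) {n : ℕ} (f : Fin n → R)
    (Q : MvPolynomial (Fin n) R) :
    Ideal.Quotient.mk J (MvPolynomial.aeval f Q)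
      = MvPolynomial.aeval (fun i => Ideal.Quotient.mk J (f i))
          (MvPolynomial.map (Ideal.Quotient.mk J) Q) := by
  induction Q using MvPolynomial.induction_on with
  | C a => simp [MvPolynomial.aeval_C, Ideal.Quotient.algebraMap_eq]
  | add p q hp hq => simp only [map_add, hp, hq]
  | mul_X p i hp => simp only [map_mul, hp, MvPolynomial.map_X, MvPolynomial.aeval_X]

/-- Evaluating a homogeneous polynomial of degree `m` at the family `C (g i) * X`. -/
private lemma aeval_C_mul_X_eq {n m : ℕ} (g : Fin n → R)
    {F : MvPolynomial (Fin n) R} (hF : F.IsHomogeneous m) :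
    MvPolynomial.aeval (fun i => Polynomial.C (g i) * Polynomial.X) F
      = Polynomial.C (MvPolynomial.aeval g F) * Polynomial.X ^ m := by
  conv_lhs => rw [MvPolynomial.as_sum F]
  conv_rhs => rw [MvPolynomial.as_sum F]
  rw [map_sum, map_sum, map_sum, Finset.sum_mul]
  refine Finset.sum_congr rfl fun d hd => ?_
  have hdeg : d.degree = m :=
    degree_eq_of_isHomogeneous hF (MvPolynomial.mem_support_iff.mp hd)
  rw [MvPolynomial.aeval_monomial, MvPolynomial.aeval_monomial]
  simp only [Finsupp.prod, mul_pow, Finset.prod_mul_distrib, Finset.prod_pow_eq_pow_sum]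
  have : d.degree = ∑ i ∈ d.support, d i := rfl
  rw [← this, hdeg]
  simp only [Polynomial.algebraMap_eq, Algebra.algebraMap_self_apply, map_mul, map_prod, map_pow]
  ring

/-- Multiplication by a polynomial homogeneous of degree 1 shifts homogeneous components. -/
private lemma homogeneousComponent_mul_one {n s : ℕ}
    (a : MvPolynomial (Fin n) R) {L : MvPolynomial (Fin n) R} (hL : L.IsHomogeneous 1) :
    MvPolynomial.homogeneousComponent (s + 1) (a * L)
      = MvPolynomial.homogeneousComponent s a * L := by
  conv_lhs => rw [← MvPolynomial.sum_homogeneousComponent a]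
  rw [Finset.sum_mul, map_sum]
  have key : ∀ i : ℕ, MvPolynomial.homogeneousComponent (s + 1)
      (MvPolynomial.homogeneousComponent i a * L)
      = if s = i then MvPolynomial.homogeneousComponent i a * L else 0 := by
    intro i
    have hhom : (MvPolynomial.homogeneousComponent i a * L).IsHomogeneous (i + 1) :=
      (MvPolynomial.homogeneousComponent_isHomogeneous i a).mul hL
    rw [MvPolynomial.homogeneousComponent_of_mem
      ((MvPolynomial.mem_homogeneousSubmodule _ _).mpr hhom)]
    simp [Nat.succ_inj]
  rw [Finset.sum_eq_single s
    (fun i _ hne => by rw [key i]; exact if_neg fun hh => hne hh.symm)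
    (fun hs => by
      rw [key s, if_pos rfl,
        MvPolynomial.homogeneousComponent_eq_zero s a
          (by simpa [Nat.lt_succ_iff, not_le] using hs), zero_mul]),
    key s, if_pos rfl]

/-- Every element of `(span (range f)) ^ t` is the value at `f` of a homogeneous
polynomial of degree `t`. -/
private lemma exists_homogeneous_of_mem_pow {n : ℕ} {f : Fin n → R} :
    ∀ (t : ℕ) (x : R), x ∈ (Ideal.span (Set.range f)) ^ t →
      ∃ F : MvPolynomial (Fin n) R, F.IsHomogeneous t ∧ MvPolynomial.aeval f F = x := by
  intro t
  induction t with
  | zero =>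
    intro x _
    exact ⟨MvPolynomial.C x, MvPolynomial.isHomogeneous_C _ _, by simp⟩
  | succ t ih =>
    intro x hx
    rw [pow_succ] at hx
    refine Submodule.mul_induction_on hx ?_ ?_
    · intro a ha b hb
      obtain ⟨F, hFhom, hFa⟩ := ih a ha
      obtain ⟨c, hc⟩ := Ideal.mem_span_range_iff_exists_fun.mp hb
      refine ⟨F * ∑ i, MvPolynomial.C (c i) * MvPolynomial.X i,
        hFhom.mul (MvPolynomial.IsHomogeneous.sum _ _ _ fun i _ =>
          MvPolynomial.isHomogeneous_C_mul_X _ _), ?_⟩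
      rw [map_mul, hFa, map_sum, ← hc]
      simp [smul_eq_mul]
    · rintro x y ⟨F, hF, hFx⟩ ⟨G, hG, hGy⟩
      exact ⟨F + G, hF.add hG, by rw [map_add, hFx, hGy]⟩

end Aux

/-- Valla: if `J ⊆ I ⊊ R` are ideals of a Noetherian local ring and `I/J`
is of linear type over `R/J`, then `J ∩ I^t = J·I^{t-1}` for every positive integer `t`. -/
theorem valla_linear_type {R : Type*} [CommRing R] [IsNoetherianRing R] [IsLocalRing R]
    (I J : Ideal R) (hJI : J ≤ I) (hI : I ≠ ⊤)
    (hlt : IsLinearType (R ⧸ J) (I.map (Ideal.Quotient.mk J))) :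
    ∀ t : ℕ, 1 ≤ t → J ⊓ I ^ t = J * I ^ (t - 1) := by
  intro t ht
  obtain ⟨s, rfl⟩ : ∃ s, t = s + 1 := ⟨t - 1, (Nat.succ_pred_eq_of_pos ht).symm⟩
  simp only [Nat.add_sub_cancel]
  refine le_antisymm ?_ (le_inf Ideal.mul_le_left ?_)
  swap
  · calc J * I ^ s ≤ I * I ^ s := Ideal.mul_mono hJI le_rfl
    _ = I ^ (s + 1) := (pow_succ' I s).symm
  -- the hard inclusion
  intro x hx
  obtain ⟨hxJ, hxI⟩ := hx
  -- choose a finite generating family for I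
  obtain ⟨n, f, hfspan0⟩ :=
    Submodule.fg_iff_exists_fin_generating_family.mp (IsNoetherian.noetherian I)
  have hfspan : Ideal.span (Set.range f) = I := by
    rw [← Ideal.submodule_span_eq]; exact hfspan0
  have hf : ∀ i, f i ∈ I := fun i => hfspan ▸ Ideal.subset_span ⟨i, rfl⟩
  set g : Fin n → R ⧸ J := fun i => Ideal.Quotient.mk J (f i) with hg_def
  have hg : ∀ i, g i ∈ I.map (Ideal.Quotient.mk J) := fun i =>
    Ideal.mem_map_of_mem _ (hf i)
  have hgspan : Ideal.span (Set.range g) = I.map (Ideal.Quotient.mk J) := by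
    rw [← hfspan, Ideal.map_span, ← Set.range_comp]
    rfl
  -- write x as a homogeneous polynomial in the generators
  obtain ⟨F, hFhom, hFx⟩ :=
    exists_homogeneous_of_mem_pow (f := f) (s + 1) x (by rwa [hfspan])
  set P : MvPolynomial (Fin n) (R ⧸ J) := MvPolynomial.map (Ideal.Quotient.mk J) F with hP_def
  have hPhom : P.IsHomogeneous (s + 1) := hFhom.map _
  have haevalP : MvPolynomial.aeval g P = 0 := by
    rw [hP_def, ← mk_aeval, hFx, Ideal.Quotient.eq_zero_iff_mem]
    exact hxJ
  -- P is in the kernel of the presentation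
  have hcoe : ∀ Q : MvPolynomial (Fin n) (R ⧸ J),
      ((reesPres (I.map (Ideal.Quotient.mk J)) g hg Q : reesAlgebra _) : Polynomial (R ⧸ J))
        = MvPolynomial.aeval (fun i => Polynomial.C (g i) * Polynomial.X) Q := by
    intro Q
    have := MvPolynomial.comp_aeval (f := fun i =>
      (⟨Polynomial.C (g i) * Polynomial.X, by
        rw [Polynomial.C_mul_X_eq_monomial]
        exact reesAlgebra.monomial_mem.mpr (by simpa using hg i)⟩ :
          reesAlgebra (I.map (Ideal.Quotient.mk J))))
      (reesAlgebra (I.map (Ideal.Quotient.mk J))).val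
    calc ((reesPres (I.map (Ideal.Quotient.mk J)) g hg Q : reesAlgebra _) : Polynomial (R ⧸ J))
        = ((reesAlgebra (I.map (Ideal.Quotient.mk J))).val.comp
            (reesPres (I.map (Ideal.Quotient.mk J)) g hg)) Q := rfl
      _ = _ := by rw [reesPres, this]; rfl
  have hPker : P ∈ RingHom.ker
      (reesPres (I.map (Ideal.Quotient.mk J)) g hg :
        MvPolynomial (Fin n) (R ⧸ J) →+* reesAlgebra (I.map (Ideal.Quotient.mk J))) := by
    rw [RingHom.mem_ker]
    apply Subtype.ext
    rw [ZeroMemClass.coe_zero]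
    show ((reesPres (I.map (Ideal.Quotient.mk J)) g hg P : reesAlgebra _) : Polynomial (R ⧸ J)) = 0
    rw [hcoe P, aeval_C_mul_X_eq g hPhom, haevalP, map_zero, zero_mul]
  -- use the linear type hypothesis
  rw [hlt n g hg hgspan] at hPker
  obtain ⟨c, hcsupp, hcsum⟩ := Submodule.mem_span_set.mp hPker
  -- decompose P using homogeneous components
  have hPsum : P = ∑ L ∈ c.support,
      MvPolynomial.homogeneousComponent s (c L) * L := by
    have h1 : P = MvPolynomial.homogeneousComponent (s + 1) P := by
      rw [MvPolynomial.homogeneousComponent_of_mem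
        ((MvPolynomial.mem_homogeneousSubmodule _ _).mpr hPhom)]
      simp
    rw [h1, ← hcsum, Finsupp.sum, map_sum]
    refine Finset.sum_congr rfl fun L hL => ?_
    have hLprop := hcsupp hL
    rw [smul_eq_mul]
    exact homogeneousComponent_mul_one (c L) hLprop.2
  -- lift everything to R
  have hlift : ∀ L ∈ c.support, ∃ QL Qa : MvPolynomial (Fin n) R,
      QL.IsHomogeneous 1 ∧ Qa.IsHomogeneous s ∧
      MvPolynomial.map (Ideal.Quotient.mk J) QL = L ∧
      MvPolynomial.map (Ideal.Quotient.mk J) Qa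
        = MvPolynomial.homogeneousComponent s (c L) ∧
      MvPolynomial.aeval f QL ∈ J := by
    intro L hL
    have hLprop := hcsupp hL
    obtain ⟨QL, hQLhom, hQLmap⟩ := exists_homogeneous_lift J L hLprop.2
    obtain ⟨Qa, hQahom, hQamap⟩ := exists_homogeneous_lift J
      (MvPolynomial.homogeneousComponent s (c L))
      (MvPolynomial.homogeneousComponent_isHomogeneous s (c L))
    refine ⟨QL, Qa, hQLhom, hQahom, hQLmap, hQamap, ?_⟩
    -- aeval f QL ∈ J since L is in the kernel
    have hLker := hLprop.1
    rw [RingHom.mem_ker] at hLker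
    have hLcoe : ((reesPres (I.map (Ideal.Quotient.mk J)) g hg L : reesAlgebra _) :
        Polynomial (R ⧸ J)) = 0 := by
      rw [show (reesPres (I.map (Ideal.Quotient.mk J)) g hg) L
        = (reesPres (I.map (Ideal.Quotient.mk J)) g hg :
        MvPolynomial (Fin n) (R ⧸ J) →+* reesAlgebra (I.map (Ideal.Quotient.mk J))) L
        from rfl, hLker]
      rfl
    rw [hcoe L, aeval_C_mul_X_eq g hLprop.2, pow_one] at hLcoe
    have haevalL : MvPolynomial.aeval g L = 0 := by
      have h1 := congrArg (fun p => Polynomial.coeff p 1) hLcoe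
      simp only [Polynomial.coeff_C_mul, Polynomial.coeff_X_one, mul_one,
        Polynomial.coeff_zero] at h1
      exact h1
    rw [← Ideal.Quotient.eq_zero_iff_mem, mk_aeval J f QL, hQLmap]
    exact haevalL
  choose QL Qa hQLhom hQahom hQLmap hQamap hQLJ using hlift
  -- the global lift G
  set G : MvPolynomial (Fin n) R :=
    ∑ L ∈ c.support.attach, Qa L.1 L.2 * QL L.1 L.2 with hG_def
  have hGmap : MvPolynomial.map (Ideal.Quotient.mk J) G = P := by
    rw [hG_def, map_sum]
    rw [hPsum, ← Finset.sum_attach c.support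
      (fun L => MvPolynomial.homogeneousComponent s (c L) * L)]
    refine Finset.sum_congr rfl fun L _ => ?_
    rw [map_mul, hQLmap, hQamap]
  have hGhom : G.IsHomogeneous (s + 1) :=
    MvPolynomial.IsHomogeneous.sum _ _ _ fun L _ =>
      (hQahom L.1 L.2).mul (hQLhom L.1 L.2)
  -- F - G has coefficients in J
  have hFG : ∀ d, MvPolynomial.coeff d (F - G) ∈ J := by
    intro d
    rw [← Ideal.Quotient.eq_zero_iff_mem, ← MvPolynomial.coeff_map]
    rw [map_sub, hGmap, hP_def, sub_self]
    simp
  -- conclude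
  have hxG : MvPolynomial.aeval f G ∈ J * I ^ s := by
    rw [hG_def, map_sum]
    refine Ideal.sum_mem _ fun L _ => ?_
    rw [map_mul, mul_comm ((MvPolynomial.aeval f) (Qa L.1 L.2))]
    exact Ideal.mul_mem_mul (hQLJ L.1 L.2) (aeval_mem_pow hf (hQahom L.1 L.2))
  have hxFG : MvPolynomial.aeval f (F - G) ∈ J * I ^ s := by
    have h1 : MvPolynomial.aeval f (F - G) ∈ J * I ^ (s + 1) :=
      aeval_mem_mul_pow hf (hFhom.sub hGhom) hFG
    have h2 : J * I ^ (s + 1) ≤ J * I ^ s :=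
      Ideal.mul_mono le_rfl (Ideal.pow_le_pow_right (by omega))
    exact h2 h1
  have : x = MvPolynomial.aeval f G + MvPolynomial.aeval f (F - G) := by
    rw [← map_add, add_sub_cancel, hFx]
  rw [this]
  exact Ideal.add_mem _ hxG hxFG
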